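/- Let L_{n,d} be the rank-2 lattice with Gram matrix (2n-2)/d² · [[1,0],[0,0]], with n ≥ 2, d ≥ 1 and d² dividing n-1. Two primitive vectors (d, y) and (d, z) of self-intersection 2n-2 lie in the same orbit of the isometry group O(L_{n,d}) if and only if y ≡ z (mod d) or y ≡ -z (mod d). -/

import Mathlib

/-- Shear map `(x, w) ↦ (x, k*x + w)`. -/
def shear1 (k : ℤ) : (ℤ × ℤ) ≃ₗ[ℤ] (ℤ × ℤ) where
  toFun p := (p.1, k * p.1 + p.2)
  invFun p := (p.1, -(k * p.1) + p.2)
  map_add' p q := by simp [Prod.ext_iff]; ring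
  map_smul' c p := by simp [Prod.ext_iff, smul_eq_mul]; ring
  left_inv p := by simp
  right_inv p := by simp

/-- Shear-plus-flip `(x, w) ↦ (x, k*x - w)`. -/
def shear2 (k : ℤ) : (ℤ × ℤ) ≃ₗ[ℤ] (ℤ × ℤ) where
  toFun p := (p.1, k * p.1 - p.2)
  invFun p := (p.1, k * p.1 - p.2)
  map_add' p q := by simp [Prod.ext_iff]; ring
  map_smul' c p := by simp [Prod.ext_iff, smul_eq_mul]; ring
  left_inv p := by simp
  right_inv p := by simp

/-- In the lattice `L_{n,d} = ℤ²` with bilinear form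
`B((x,y),(x',y')) = ((2n-2)/d²)·x·x'` (`n ≥ 2`, `d ≥ 1`, `d² ∣ n-1`), two primitive vectors
`(d, y)` and `(d, z)` of self-intersection `2n-2` lie in the same orbit of the isometry
group if and only if `y ≡ z (mod d)` or `y ≡ -z (mod d)`. -/
theorem stmt_4 (n d : ℤ) (hn : 2 ≤ n) (hd : 1 ≤ d) (hdvd : d ^ 2 ∣ n - 1)
    (y z : ℤ) (hy : IsCoprime d y) (hz : IsCoprime d z) :
    (∃ f : (ℤ × ℤ) ≃ₗ[ℤ] (ℤ × ℤ),
        (∀ v w : ℤ × ℤ,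
          (2 * (n - 1) / d ^ 2) * (f v).1 * (f w).1 = (2 * (n - 1) / d ^ 2) * v.1 * w.1) ∧
        f (d, y) = (d, z)) ↔
      (d ∣ y - z ∨ d ∣ y + z) := by
  obtain ⟨m, hm⟩ := hdvd
  have hd2 : (0:ℤ) < d ^ 2 := by positivity
  have hm0 : 0 < m := by nlinarith
  have hC : 2 * (n - 1) / d ^ 2 = 2 * m := by
    rw [hm, show 2 * (d ^ 2 * m) = d ^ 2 * (2 * m) by ring]
    exact Int.mul_ediv_cancel_left _ (ne_of_gt hd2)
  have hCne : 2 * (n - 1) / d ^ 2 ≠ 0 := by rw [hC]; positivity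
  have hdne : d ≠ 0 := by omega
  constructor
  · rintro ⟨f, hf, hfd⟩
    set C := 2 * (n - 1) / d ^ 2 with hCdef
    set a := (f (1, 0)).1
    set c2 := (f (1, 0)).2
    set b := (f (0, 1)).1
    set e := (f (0, 1)).2
    have key : ∀ v : ℤ × ℤ, f v = (v.1 * a + v.2 * b, v.1 * c2 + v.2 * e) := by
      intro v
      have hv : v = v.1 • ((1:ℤ), (0:ℤ)) + v.2 • ((0:ℤ), (1:ℤ)) := by
        simp [Prod.ext_iff]
      conv_lhs => rw [hv]
      rw [map_add, map_smul, map_smul]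
      simp [Prod.ext_iff, smul_eq_mul]
      exact ⟨rfl, rfl⟩
    -- b = 0
    have hb : b = 0 := by
      have h1 := hf (0, 1) (0, 1)
      simp only at h1
      have : C * b * b = 0 := by simpa using h1
      have hbb : b * b = 0 := by
        rcases mul_eq_zero.mp (by linarith [this] : C * b * b = 0) with h | h
        · rcases mul_eq_zero.mp h with h' | h'
          · exact absurd h' hCne
          · rw [h']; ring
        · rw [h]; ring
      exact mul_self_eq_zero.mp hbb
    -- a = 1
    have ha : a = 1 := by
      have h1 := hf (1, 0) (d, y)
      rw [hfd] at h1
      simp only at h1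
      -- C * a * d = C * 1 * d
      have : C * a * d = C * 1 * d := by
        have h2 := key (1, 0)
        simpa using h1
      have := mul_right_cancel₀ hdne this
      exact mul_left_cancel₀ hCne this
    have hz2 : z = d * c2 + y * e := by
      have := key (d, y)
      rw [hfd] at this
      have h2 := (Prod.ext_iff.mp this).2
      simpa using h2
    -- e is a unit
    have he : e = 1 ∨ e = -1 := by
      set p := f.symm (0, 1) with hp
      have hfp : f p = (0, 1) := f.apply_symm_apply _
      have hkp := key p
      rw [hfp] at hkp
      have h1 : (0:ℤ) = p.1 * a + p.2 * b := congrArg Prod.fst hkp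
      have h2 : (1:ℤ) = p.1 * c2 + p.2 * e := congrArg Prod.snd hkp
      rw [ha, hb] at h1
      have h1' : (0:ℤ) = p.1 := by linarith
      have hpe : p.2 * e = 1 := by linear_combination -h2 + c2 * h1'
      have : IsUnit e := IsUnit.of_mul_eq_one (a := e) p.2 (by linear_combination hpe)
      exact Int.isUnit_iff.mp this
    rcases he with he | he
    · left
      refine ⟨-c2, ?_⟩
      rw [he] at hz2
      linear_combination -hz2
    · right
      refine ⟨c2, ?_⟩
      rw [he] at hz2
      linear_combination hz2
  · rintro (⟨k, hk⟩ | ⟨k, hk⟩)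
    · refine ⟨shear1 (-k), fun v w => by simp [shear1], ?_⟩
      simp only [shear1, LinearEquiv.coe_mk, LinearMap.coe_mk, AddHom.coe_mk]
      exact Prod.ext rfl (by dsimp; linear_combination hk)
    · refine ⟨shear2 k, fun v w => by simp [shear2], ?_⟩
      simp only [shear2, LinearEquiv.coe_mk, LinearMap.coe_mk, AddHom.coe_mk]
      exact Prod.ext rfl (by dsimp; linear_combination -hk)
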